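/- arXiv:2512.10461 — 5 statements merged into one kernel-verified Lean document; each statement's English description precedes it below -/
import Mathlib

section
/- Let a ∈ ℝⁿ be a nonzero vector, b ∈ ℝ, δ > 0, and let p ∈ ℝⁿ satisfy ⟨a, p⟩ ≤ b. Then for every z ∈ ℝⁿ, the SKM update z' = T_{a,b,δ}(z) satisfies the quantitative Fejér inequality ‖z' − p‖² ≤ ‖z − p‖² − δ(2 − δ)·(max(⟨a, z⟩ − b, 0))² / ‖a‖². -/
/-- Quantitative Fejér inequality for the SKM update: if `⟪a,p⟫ ≤ b` then
`‖T_{a,b,δ}(z) − p‖² ≤ ‖z − p‖² − δ(2−δ)·(max(⟪a,z⟫ − b, 0))²/‖a‖²`. -/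
theorem skm_update_fejer_sq
    (n : ℕ) (a : EuclideanSpace ℝ (Fin n)) (ha : a ≠ 0) (b : ℝ)
    (δ : ℝ) (hδ : 0 < δ)
    (p : EuclideanSpace ℝ (Fin n)) (hp : (inner ℝ a p : ℝ) ≤ b)
    (z : EuclideanSpace ℝ (Fin n)) :
    ‖(z - (δ * max ((inner ℝ a z : ℝ) - b) 0 / ‖a‖ ^ 2) • a) - p‖ ^ 2 ≤
      ‖z - p‖ ^ 2 - δ * (2 - δ) * (max ((inner ℝ a z : ℝ) - b) 0) ^ 2 / ‖a‖ ^ 2 := by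
  set c : ℝ := (inner ℝ a z : ℝ) with hc
  set q : ℝ := (inner ℝ a p : ℝ) with hq
  set m : ℝ := max (c - b) 0 with hm
  set t : ℝ := δ * m / ‖a‖ ^ 2 with ht
  have hA : (0:ℝ) < ‖a‖ ^ 2 := pow_pos (norm_pos_iff.mpr ha) 2
  have hm0 : 0 ≤ m := le_max_right _ _
  have hmm : m ^ 2 ≤ m * (c - q) := by
    rcases le_or_gt (c - b) 0 with h | h
    · have : m = 0 := max_eq_right h
      simp [this]
    · have hmeq : m = c - b := max_eq_left h.le
      nlinarith
  have hre : z - t • a - p = (z - p) - t • a := by abel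
  rw [hre, norm_sub_sq_real, real_inner_smul_right, norm_smul]
  have hip : (inner ℝ (z - p) a : ℝ) = c - q := by
    rw [real_inner_comm, inner_sub_right]
  rw [hip]
  have hns : (‖t‖ * ‖a‖) ^ 2 = t ^ 2 * ‖a‖ ^ 2 := by
    rw [mul_pow, Real.norm_eq_abs, sq_abs]
  rw [hns, ht]
  have hAne : (‖a‖:ℝ) ^ 2 ≠ 0 := ne_of_gt hA
  rw [div_pow, div_mul_eq_mul_div, div_mul_eq_mul_div]
  have key : ((δ * m) ^ 2 * ‖a‖ ^ 2 / (‖a‖ ^ 2) ^ 2 : ℝ)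
      = δ ^ 2 * m ^ 2 / ‖a‖ ^ 2 := by
    field_simp
  rw [key]
  have e1 : ‖z - p‖ ^ 2 - 2 * (δ * m * (c - q) / ‖a‖ ^ 2) + δ ^ 2 * m ^ 2 / ‖a‖ ^ 2
      = ‖z - p‖ ^ 2 + (δ ^ 2 * m ^ 2 - 2 * (δ * m * (c - q))) / ‖a‖ ^ 2 := by ring
  have e2 : ‖z - p‖ ^ 2 - δ * (2 - δ) * m ^ 2 / ‖a‖ ^ 2
      = ‖z - p‖ ^ 2 + (-(δ * (2 - δ) * m ^ 2)) / ‖a‖ ^ 2 := by ring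
  rw [e1, e2]
  have main : (δ ^ 2 * m ^ 2 - 2 * (δ * m * (c - q))) / ‖a‖ ^ 2
      ≤ (-(δ * (2 - δ) * m ^ 2)) / ‖a‖ ^ 2 := by
    apply (div_le_div_iff_of_pos_right hA).mpr
    nlinarith [mul_le_mul_of_nonneg_left hmm (by positivity : (0:ℝ) ≤ 2 * δ)]
  linarith [main]
end

section
/- Let a ∈ ℝⁿ be a nonzero vector, b ∈ ℝ, and 0 < δ < 2, and let p ∈ ℝⁿ satisfy ⟨a, p⟩ ≤ b. Then for every z ∈ ℝⁿ, the SKM update does not increase the distance to p: ‖T_{a,b,δ}(z) − p‖ ≤ ‖z − p‖. -/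
/-- For `0 < δ < 2` and any point `p` with `⟪a,p⟫ ≤ b`, the SKM update does not
increase the distance to `p`: `‖T_{a,b,δ}(z) − p‖ ≤ ‖z − p‖`. -/
theorem skm_update_nonexpansive_toward_feasible
    (n : ℕ) (a : EuclideanSpace ℝ (Fin n)) (ha : a ≠ 0) (b : ℝ)
    (δ : ℝ) (hδ0 : 0 < δ) (hδ2 : δ < 2)
    (p : EuclideanSpace ℝ (Fin n)) (hp : (inner ℝ a p : ℝ) ≤ b)
    (z : EuclideanSpace ℝ (Fin n)) :
    ‖(z - (δ * max ((inner ℝ a z : ℝ) - b) 0 / ‖a‖ ^ 2) • a) - p‖ ≤ ‖z - p‖ := by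
  have han : ‖a‖ ≠ 0 := norm_ne_zero_iff.mpr ha
  have hna : (0:ℝ) < ‖a‖ ^ 2 := by positivity
  set t : ℝ := δ * max ((inner ℝ a z : ℝ) - b) 0 / ‖a‖ ^ 2 with ht
  have hre : z - t • a - p = (z - p) - t • a := by abel
  rw [hre]
  have hsq : ‖(z - p) - t • a‖ ^ 2 ≤ ‖z - p‖ ^ 2 := by
    have hexp : ‖(z - p) - t • a‖ ^ 2
        = ‖z - p‖ ^ 2 - 2 * (t * (inner ℝ a (z - p) : ℝ)) + t ^ 2 * ‖a‖ ^ 2 := by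
      rw [norm_sub_sq_real, real_inner_smul_right, norm_smul, real_inner_comm,
        mul_pow, Real.norm_eq_abs, sq_abs]
    rw [hexp]
    have hkey : t ^ 2 * ‖a‖ ^ 2 ≤ 2 * (t * (inner ℝ a (z - p) : ℝ)) := by
      rcases le_or_gt ((inner ℝ a z : ℝ)) b with hzb | hzb
      · have : t = 0 := by
          rw [ht, max_eq_right (by linarith)]; simp
        simp [this]
      · have hm : max ((inner ℝ a z : ℝ) - b) 0 = (inner ℝ a z : ℝ) - b :=
          max_eq_left (by linarith)
        have ht0 : 0 ≤ t :=
          div_nonneg (mul_nonneg hδ0.le (le_max_right _ 0)) hna.le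
        have hinner : (inner ℝ a (z - p) : ℝ) = (inner ℝ a z : ℝ) - (inner ℝ a p : ℝ) := by
          rw [inner_sub_right]
        have hta : t * ‖a‖ ^ 2 = δ * ((inner ℝ a z : ℝ) - b) := by
          rw [ht, hm]; field_simp
        have h1 : t * ‖a‖ ^ 2 ≤ 2 * (inner ℝ a (z - p) : ℝ) := by
          rw [hta, hinner]; nlinarith
        calc t ^ 2 * ‖a‖ ^ 2 = t * (t * ‖a‖ ^ 2) := by ring
          _ ≤ t * (2 * (inner ℝ a (z - p) : ℝ)) := by
              exact mul_le_mul_of_nonneg_left h1 ht0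
          _ = 2 * (t * (inner ℝ a (z - p) : ℝ)) := by ring
    linarith
  have h := Real.sqrt_le_sqrt hsq
  rwa [Real.sqrt_sq (norm_nonneg _), Real.sqrt_sq (norm_nonneg _)] at h
end

section
/- (Theorem 1: SKM L2 projection approximation in expectation.) Let A be a p × n real matrix whose rows a₁ᵀ, …, a_pᵀ are all nonzero, let b ∈ ℝᵖ, and suppose the feasible set P = {z ∈ ℝⁿ : Az ≤ b} is nonempty. Let 0 < δ < 2 and z₀ ∈ ℝⁿ. Let μ be any probability mass function on the finite set of index sequences ω = (i₀, …, i_{k−1}) ∈ {1, …, p}^k, and for each ω let z_k(ω) denote the k-th SKM iterate from z₀ along ω. Then the expected distance satisfies 𝔼_{ω∼μ}[‖z_k(ω) − z₀‖] = Σ_ω μ(ω)·‖z_k(ω) − z₀‖ ≤ 2 · infDist(z₀, P). -/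
open Metric

/-- The SKM update `T_{a,b,δ}(z) = z − δ·max(⟪a,z⟫ − b, 0)/‖a‖² • a`. -/
noncomputable def skmT {n : ℕ} (a : EuclideanSpace ℝ (Fin n)) (b δ : ℝ)
    (z : EuclideanSpace ℝ (Fin n)) : EuclideanSpace ℝ (Fin n) :=
  z - (δ * max ((inner ℝ a z : ℝ) - b) 0 / ‖a‖ ^ 2) • a

/-- The `i`-th row of a matrix, viewed as a vector of Euclidean space. -/
noncomputable def Matrix.rowEuc {p n : ℕ} (A : Matrix (Fin p) (Fin n) ℝ) (i : Fin p) :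
    EuclideanSpace ℝ (Fin n) := (WithLp.equiv 2 _).symm (A i)

lemma inner_rowEuc {p n : ℕ} (A : Matrix (Fin p) (Fin n) ℝ) (i : Fin p)
    (w : EuclideanSpace ℝ (Fin n)) : (inner ℝ (A.rowEuc i) w : ℝ) = A.mulVec w i := by
  simp [Matrix.rowEuc, Matrix.mulVec, dotProduct, PiLp.inner_apply,
    WithLp.equiv_symm_apply, mul_comm]

/-- Fejér monotonicity of the SKM step. -/
lemma skm_step_nonexp {n : ℕ} (a : EuclideanSpace ℝ (Fin n)) (ha : a ≠ 0)
    (bb δ : ℝ) (hδ0 : 0 < δ) (hδ2 : δ < 2)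
    (z w : EuclideanSpace ℝ (Fin n)) (hw : (inner ℝ a w : ℝ) ≤ bb) :
    ‖skmT a bb δ z - w‖ ≤ ‖z - w‖ := by
  have hna : (0:ℝ) < ‖a‖ ^ 2 := by
    have := norm_pos_iff.mpr ha
    positivity
  set m : ℝ := max ((inner ℝ a z : ℝ) - bb) 0 with hm
  have hm0 : 0 ≤ m := le_max_right _ _
  set t : ℝ := δ * m / ‖a‖ ^ 2 with ht
  have ht0 : 0 ≤ t := by positivity
  have key : ‖(z - w) - t • a‖ ^ 2 ≤ ‖z - w‖ ^ 2 := by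
    rw [norm_sub_sq_real]
    have h1 : (inner ℝ (z - w) (t • a) : ℝ) = t * ((inner ℝ a z : ℝ) - (inner ℝ a w : ℝ)) := by
      rw [real_inner_smul_right, inner_sub_left, real_inner_comm z a, real_inner_comm w a]
    have h2 : ‖t • a‖ ^ 2 = t ^ 2 * ‖a‖ ^ 2 := by
      rw [norm_smul]; rw [mul_pow]; simp [abs_of_nonneg ht0, sq_abs]
    rw [h1, h2]
    have htm : t * ((inner ℝ a z : ℝ) - bb) = t * m := by
      rcases le_or_gt ((inner ℝ a z : ℝ) - bb) 0 with h | h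
      · have : m = 0 := max_eq_right h
        have : t = 0 := by rw [ht, this]; ring
        simp [this]
      · have : m = (inner ℝ a z : ℝ) - bb := max_eq_left h.le
        rw [this]
    have hiz : t * m ≤ t * ((inner ℝ a z : ℝ) - (inner ℝ a w : ℝ)) := by
      rw [← htm]
      exact mul_le_mul_of_nonneg_left (by linarith) ht0
    have hta : t ^ 2 * ‖a‖ ^ 2 = t * (δ * m) := by
      rw [ht]; field_simp
    nlinarith [mul_nonneg ht0 hm0]
  have : skmT a bb δ z - w = (z - w) - t • a := by
    rw [skmT]; abel
  rw [this]
  nlinarith [norm_nonneg ((z - w) - t • a), norm_nonneg (z - w), key]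

/-- Theorem 1 (SKM L2 projection approximation in expectation): for any
probability mass function `μ` on the finite set of index sequences
`ω ∈ {1,…,p}^k`, the expected distance of the `k`-th SKM iterate to the initial
point is at most twice the distance from `z₀` to the feasible set
`P = {z : Az ≤ b}`. -/
theorem skm_expected_l2_approx
    (p n k : ℕ) (A : Matrix (Fin p) (Fin n) ℝ) (b : Fin p → ℝ)
    (hrows : ∀ i, A.rowEuc i ≠ 0)
    (hfeas : {w : EuclideanSpace ℝ (Fin n) | ∀ i, A.mulVec w i ≤ b i}.Nonempty)
    (δ : ℝ) (hδ0 : 0 < δ) (hδ2 : δ < 2)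
    (z₀ : EuclideanSpace ℝ (Fin n))
    (μ : (Fin k → Fin p) → ℝ) (hμ0 : ∀ ω, 0 ≤ μ ω) (hμ1 : ∑ ω, μ ω = 1)
    (z : (Fin k → Fin p) → ℕ → EuclideanSpace ℝ (Fin n))
    (hz0 : ∀ ω, z ω 0 = z₀)
    (hstep : ∀ ω, ∀ j : Fin k,
      z ω (j.1 + 1) = skmT (A.rowEuc (ω j)) (b (ω j)) δ (z ω j.1)) :
    ∑ ω, μ ω * ‖z ω k - z₀‖ ≤
      2 * infDist z₀ {w : EuclideanSpace ℝ (Fin n) | ∀ i, A.mulVec w i ≤ b i} := by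
  set P := {w : EuclideanSpace ℝ (Fin n) | ∀ i, A.mulVec w i ≤ b i}
  have hbound : ∀ ω, ‖z ω k - z₀‖ ≤ 2 * infDist z₀ P := by
    intro ω
    have hmono : ∀ j : ℕ, j ≤ k → ∀ w ∈ P, ‖z ω j - w‖ ≤ ‖z₀ - w‖ := by
      intro j
      induction j with
      | zero => intro _ w _; rw [hz0]
      | succ j ih =>
        intro hj w hw
        have hjk : j < k := Nat.lt_of_succ_le hj
        have := hstep ω ⟨j, hjk⟩
        simp only at this
        rw [this]
        refine le_trans (skm_step_nonexp _ (hrows _) _ _ hδ0 hδ2 _ _ ?_) (ih (le_of_lt hjk) w hw)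
        rw [inner_rowEuc]; exact hw _
    have h2 : ∀ w ∈ P, ‖z ω k - z₀‖ / 2 ≤ dist z₀ w := by
      intro w hw
      have h1 := hmono k le_rfl w hw
      have h3 : ‖z ω k - z₀‖ ≤ ‖z ω k - w‖ + ‖w - z₀‖ := norm_sub_le_norm_sub_add_norm_sub _ _ _
      have h4 : ‖w - z₀‖ = ‖z₀ - w‖ := norm_sub_rev _ _
      rw [dist_eq_norm]
      linarith
    have hle : ‖z ω k - z₀‖ / 2 ≤ infDist z₀ P := by
      by_contra h
      push_neg at h
      obtain ⟨w, hw, hd⟩ := (infDist_lt_iff hfeas).mp h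
      exact absurd hd (not_lt.mpr (h2 w hw))
    linarith
  calc ∑ ω, μ ω * ‖z ω k - z₀‖ ≤ ∑ ω, μ ω * (2 * infDist z₀ P) := by
        apply Finset.sum_le_sum
        intro ω _
        exact mul_le_mul_of_nonneg_left (hbound ω) (hμ0 ω)
    _ = 2 * infDist z₀ P := by rw [← Finset.sum_mul, hμ1, one_mul]
end

section
/- Let A be a p × n real matrix, b ∈ ℝᵖ, C a q × n real matrix, d ∈ ℝ^q, y₀ ∈ ℝⁿ, and suppose the feasible set F = {z ∈ ℝⁿ : Az ≤ b and Cz = d} is nonempty. Let z_proj be the orthogonal projection of y₀ onto {z : Cz = d}, and let N : ℝʳ → ℝⁿ be a linear isometry (‖Nw‖ = ‖w‖ for all w) whose range equals null(C). Let W = {w ∈ ℝʳ : (A∘N) w ≤ b − A·z_proj}. Then infDist(y₀, F)² = ‖y₀ − z_proj‖² + infDist(0, W)². -/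
open Matrix Metric

/-- Pythagorean decomposition of the distance to the mixed-constraint feasible
set: with `z_proj` the orthogonal projection of `y₀` onto `{z : Cz = d}` and
`N` a linear isometry whose range is the null space of `C`,
`infDist(y₀, F)² = ‖y₀ − z_proj‖² + infDist(0, W)²`, where
`W = {w : (A∘N) w ≤ b − A·z_proj}`. -/
theorem infDist_sq_decomposition_nullspace
    (p q n r : ℕ) (A : Matrix (Fin p) (Fin n) ℝ) (b : Fin p → ℝ)
    (C : Matrix (Fin q) (Fin n) ℝ) (d : Fin q → ℝ)
    (y₀ : EuclideanSpace ℝ (Fin n))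
    (F : Set (EuclideanSpace ℝ (Fin n)))
    (hF : F = {z : EuclideanSpace ℝ (Fin n) | (∀ i, A.mulVec z i ≤ b i) ∧ C.mulVec z = d})
    (hFne : F.Nonempty)
    (zproj : EuclideanSpace ℝ (Fin n)) (hzproj_mem : C.mulVec zproj = d)
    (hzproj_min : ∀ z : EuclideanSpace ℝ (Fin n), C.mulVec z = d →
      ‖y₀ - zproj‖ ≤ ‖y₀ - z‖)
    (N : EuclideanSpace ℝ (Fin r) →ₗᵢ[ℝ] EuclideanSpace ℝ (Fin n))
    (hN : Set.range N = {v : EuclideanSpace ℝ (Fin n) | C.mulVec v = 0})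
    (W : Set (EuclideanSpace ℝ (Fin r)))
    (hW : W = {w | ∀ i, A.mulVec (N w) i ≤ b i - A.mulVec zproj i}) :
    (infDist y₀ F) ^ 2 = ‖y₀ - zproj‖ ^ 2 + (infDist 0 W) ^ 2 := by
  set u := y₀ - zproj with hu
  -- orthogonality of u to the null space of C
  have horth : ∀ v : EuclideanSpace ℝ (Fin n), C.mulVec v = 0 →
      (inner ℝ u v) = 0 := by
    intro v hv
    by_contra h
    have hvne : v ≠ 0 := by
      rintro rfl
      exact h (by simp)
    have hvpos : (0:ℝ) < ‖v‖ ^ 2 := pow_pos (norm_pos_iff.mpr hvne) 2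
    set t : ℝ := (inner ℝ u v) / ‖v‖ ^ 2 with ht
    have hmem : C.mulVec (zproj + t • v) = d := by
      have : C.mulVec (zproj + t • v) = C.mulVec zproj + t • C.mulVec v := by
        rw [Matrix.mulVec_add, Matrix.mulVec_smul]
      rw [this, hv, hzproj_mem]
      simp
    have hle := hzproj_min (zproj + t • v) hmem
    have h1 : y₀ - (zproj + t • v) = u - t • v := by
      rw [hu]; abel
    rw [h1] at hle
    have hsq : ‖u‖ ^ 2 ≤ ‖u - t • v‖ ^ 2 :=
      pow_le_pow_left₀ (norm_nonneg _) hle 2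
    have hexp : ‖u - t • v‖ ^ 2 =
        ‖u‖ ^ 2 - 2 * (t * (inner ℝ u v)) + t ^ 2 * ‖v‖ ^ 2 := by
      rw [@norm_sub_sq_real, real_inner_smul_right, norm_smul]
      ring_nf
      simp [mul_pow]
    rw [hexp] at hsq
    have hinnersq : (0:ℝ) < (inner ℝ u v) ^ 2 := by
      have : (inner ℝ u v) ^ 2 ≠ 0 := pow_ne_zero 2 h
      exact lt_of_le_of_ne (sq_nonneg _) (Ne.symm this)
    have hdivpos : (0:ℝ) < (inner ℝ u v) ^ 2 / ‖v‖ ^ 2 := div_pos hinnersq hvpos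
    have h4 : t * (inner ℝ u v) = (inner ℝ u v) ^ 2 / ‖v‖ ^ 2 := by
      rw [ht]; field_simp
    have h5 : t ^ 2 * ‖v‖ ^ 2 = (inner ℝ u v) ^ 2 / ‖v‖ ^ 2 := by
      rw [ht]; field_simp
    rw [h4, h5] at hsq
    linarith
  -- parametrization of F
  have hFW : F = (fun w => zproj + N w) '' W := by
    ext z
    constructor
    · intro hz
      rw [hF] at hz
      obtain ⟨hzA, hzC⟩ := hz
      have hmem : C.mulVec (z - zproj) = 0 := by
        rw [Matrix.mulVec_sub, hzC, hzproj_mem]; simp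
      have : z - zproj ∈ Set.range N := by rw [hN]; exact hmem
      obtain ⟨w, hw⟩ := this
      refine ⟨w, ?_, show zproj + N w = z by rw [hw]; abel⟩
      rw [hW]
      intro i
      have : A.mulVec (N w) i = A.mulVec z i - A.mulVec zproj i := by
        rw [hw, WithLp.ofLp_sub, Matrix.mulVec_sub]; rfl
      rw [this]
      exact sub_le_sub_right (hzA i) _
    · rintro ⟨w, hwW, rfl⟩
      rw [hW] at hwW
      rw [hF]
      constructor
      · intro i
        have : A.mulVec (zproj + N w) i = A.mulVec zproj i + A.mulVec (N w) i := by
          rw [Matrix.mulVec_add]; rfl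
        change A.mulVec (zproj + N w) i ≤ b i
        rw [this]
        have := hwW i
        linarith
      · have hNw : C.mulVec (N w) = 0 := by
          have : (N w : EuclideanSpace ℝ (Fin n)) ∈ Set.range N := ⟨w, rfl⟩
          rw [hN] at this
          exact this
        rw [WithLp.ofLp_add, Matrix.mulVec_add, hNw, hzproj_mem]
        simp
  -- Pythagorean distance identity
  have hdist : ∀ w : EuclideanSpace ℝ (Fin r),
      dist y₀ (zproj + N w) ^ 2 = ‖u‖ ^ 2 + ‖w‖ ^ 2 := by
    intro w
    have hNw : C.mulVec (N w) = 0 := by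
      have : (N w : EuclideanSpace ℝ (Fin n)) ∈ Set.range N := ⟨w, rfl⟩
      rw [hN] at this
      exact this
    have h1 : y₀ - (zproj + N w) = u - N w := by rw [hu]; abel
    rw [dist_eq_norm, h1, @norm_sub_sq_real, horth _ hNw, N.norm_map]
    ring
  -- W is nonempty
  have hWne : W.Nonempty := by
    obtain ⟨z, hz⟩ := hFne
    rw [hFW] at hz
    obtain ⟨w, hw, _⟩ := hz
    exact ⟨w, hw⟩
  -- W is closed
  have hcont : ∀ i, Continuous fun w : EuclideanSpace ℝ (Fin r) =>
      A.mulVec (N w) i := by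
    intro i
    have hlin : IsLinearMap ℝ fun w : EuclideanSpace ℝ (Fin r) =>
        A.mulVec (N w) i := by
      constructor
      · intro x y
        rw [N.map_add, WithLp.ofLp_add, Matrix.mulVec_add]
        rfl
      · intro c x
        rw [N.map_smul, WithLp.ofLp_smul, Matrix.mulVec_smul]
        rfl
    exact (IsLinearMap.mk' _ hlin).continuous_of_finiteDimensional
  have hWclosed : IsClosed W := by
    have hWeq : W = ⋂ i, {w : EuclideanSpace ℝ (Fin r) |
        A.mulVec (N w) i ≤ b i - A.mulVec zproj i} := by
      rw [hW]; ext w; simp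
    rw [hWeq]
    exact isClosed_iInter fun i => isClosed_le (hcont i) continuous_const
  obtain ⟨wmin, hwminW, hwmin⟩ := hWclosed.exists_infDist_eq_dist hWne 0
  have hwminnorm : infDist 0 W = ‖wmin‖ := by
    rw [hwmin, dist_eq_norm, zero_sub, norm_neg]
  apply le_antisymm
  · -- infDist y₀ F ≤ sqrt(...)
    have hle : infDist y₀ F ≤ dist y₀ (zproj + N wmin) := by
      apply infDist_le_dist_of_mem
      rw [hFW]
      exact ⟨wmin, hwminW, rfl⟩
    calc infDist y₀ F ^ 2 ≤ dist y₀ (zproj + N wmin) ^ 2 :=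
          pow_le_pow_left₀ infDist_nonneg hle 2
      _ = ‖u‖ ^ 2 + ‖wmin‖ ^ 2 := hdist wmin
      _ = ‖u‖ ^ 2 + infDist 0 W ^ 2 := by rw [hwminnorm]
  · -- the reverse inequality
    set s : ℝ := Real.sqrt (‖u‖ ^ 2 + infDist 0 W ^ 2) with hs
    have hssq : s ^ 2 = ‖u‖ ^ 2 + infDist 0 W ^ 2 := by
      rw [hs, Real.sq_sqrt (by positivity)]
    have hkey : ∀ z ∈ F, s ≤ dist y₀ z := by
      intro z hz
      rw [hFW] at hz
      obtain ⟨w, hwW, rfl⟩ := hz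
      have h2 : infDist 0 W ≤ ‖w‖ := by
        have := infDist_le_dist_of_mem (x := (0 : EuclideanSpace ℝ (Fin r))) hwW
        rwa [dist_eq_norm, zero_sub, norm_neg] at this
      have h3 : s ^ 2 ≤ dist y₀ (zproj + N w) ^ 2 := by
        rw [hssq, hdist w]
        have : infDist 0 W ^ 2 ≤ ‖w‖ ^ 2 :=
          pow_le_pow_left₀ infDist_nonneg h2 2
        linarith
      calc s = Real.sqrt (s ^ 2) := by rw [Real.sqrt_sq (Real.sqrt_nonneg _)]
        _ ≤ Real.sqrt (dist y₀ (zproj + N w) ^ 2) := Real.sqrt_le_sqrt h3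
        _ = dist y₀ (zproj + N w) := Real.sqrt_sq dist_nonneg
    have hsle : s ≤ infDist y₀ F := by
      by_contra hlt
      push_neg at hlt
      obtain ⟨z, hzF, hdz⟩ := (infDist_lt_iff hFne).mp hlt
      exact absurd hdz (not_lt.mpr (hkey z hzF))
    calc ‖u‖ ^ 2 + infDist 0 W ^ 2 = s ^ 2 := hssq.symm
      _ ≤ infDist y₀ F ^ 2 := pow_le_pow_left₀ (Real.sqrt_nonneg _) hsle 2
end

section
/- (Differentiability of one SKM step away from ties and kinks.) Let A : ℝᵐ → ℝ^{p×n} and b : ℝᵐ → ℝᵖ be differentiable at x₀, with rows aᵢ(x)ᵀ of A(x), let S ⊆ {1, …, p} be a fixed sample set, let z : ℝᵐ → ℝⁿ be differentiable at x₀, and let δ > 0. Suppose there is i* ∈ S such that: (i) max(a_{i*}(x₀)ᵀz(x₀) − b_{i*}(x₀), 0) > max(aᵢ(x₀)ᵀz(x₀) − bᵢ(x₀), 0) for every i ∈ S with i ≠ i* (unique strict argmax), (ii) a_{i*}(x₀)ᵀz(x₀) − b_{i*}(x₀) > 0, and (iii) a_{i*}(x₀) ≠ 0. Then the one-step SKM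 map x ↦ z(x) − δ·max(a_{i(x)}(x)ᵀz(x) − b_{i(x)}(x), 0)/‖a_{i(x)}(x)‖² · a_{i(x)}(x), where i(x) ∈ S is any selection attaining the maximum violation max_{i∈S} max(aᵢ(x)ᵀz(x) − bᵢ(x), 0), is differentiable at x₀, and its derivative equals that of the smooth map x ↦ z(x) − δ·(a_{i*}(x)ᵀz(x) − b_{i*}(x))/‖a_{i*}(x)‖² · a_{i*}(x). -/
/-- Differentiability of one SKM step away from ties and kinks: if at `x₀` the
argmax constraint `i*` over the sample `S` is unique and strictly violated with
nonzero row, then the one-step SKM map (defined via any argmax selection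
`sel`) is differentiable at `x₀` and its derivative equals that of the smooth
map using the fixed row `i*`. -/
theorem skm_one_step_differentiable_at
    (m p n : ℕ)
    -- `a i x` is the `i`-th row of the constraint matrix `A(x)`
    (a : Fin p → EuclideanSpace ℝ (Fin m) → EuclideanSpace ℝ (Fin n))
    (b : Fin p → EuclideanSpace ℝ (Fin m) → ℝ)
    (x₀ : EuclideanSpace ℝ (Fin m))
    (ha : ∀ i, DifferentiableAt ℝ (a i) x₀)
    (hb : ∀ i, DifferentiableAt ℝ (b i) x₀)
    (S : Finset (Fin p))
    (z : EuclideanSpace ℝ (Fin m) → EuclideanSpace ℝ (Fin n))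
    (hz : DifferentiableAt ℝ z x₀)
    (δ : ℝ) (hδ : 0 < δ)
    (istar : Fin p) (histar : istar ∈ S)
    -- (i) unique strict argmax at `x₀`
    (hstrict : ∀ i ∈ S, i ≠ istar →
      max ((inner ℝ (a i x₀) (z x₀) : ℝ) - b i x₀) 0 <
        max ((inner ℝ (a istar x₀) (z x₀) : ℝ) - b istar x₀) 0)
    -- (ii) strictly violated at `x₀`
    (hviol : 0 < (inner ℝ (a istar x₀) (z x₀) : ℝ) - b istar x₀)
    -- (iii) nonzero row at `x₀`
    (hrow : a istar x₀ ≠ 0)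
    -- `sel x` is any selection attaining the maximum violation over `S`
    (sel : EuclideanSpace ℝ (Fin m) → Fin p)
    (hsel_mem : ∀ x, sel x ∈ S)
    (hsel_max : ∀ x, ∀ i ∈ S,
      max ((inner ℝ (a i x) (z x) : ℝ) - b i x) 0 ≤
        max ((inner ℝ (a (sel x) x) (z x) : ℝ) - b (sel x) x) 0) :
    let F : EuclideanSpace ℝ (Fin m) → EuclideanSpace ℝ (Fin n) := fun x =>
      z x - (δ * max ((inner ℝ (a (sel x) x) (z x) : ℝ) - b (sel x) x) 0 /
        ‖a (sel x) x‖ ^ 2) • a (sel x) x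
    let G : EuclideanSpace ℝ (Fin m) → EuclideanSpace ℝ (Fin n) := fun x =>
      z x - (δ * ((inner ℝ (a istar x) (z x) : ℝ) - b istar x) /
        ‖a istar x‖ ^ 2) • a istar x
    DifferentiableAt ℝ F x₀ ∧ fderiv ℝ F x₀ = fderiv ℝ G x₀ := by
  intro F G
  set f : Fin p → EuclideanSpace ℝ (Fin m) → ℝ :=
    fun i x => (inner ℝ (a i x) (z x) : ℝ) - b i x with hf
  have hfc : ∀ i, ContinuousAt (f i) x₀ := fun i =>
    (((ha i).inner ℝ hz).sub (hb i)).continuousAt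
  -- eventually, istar strictly dominates all other constraints in S and is violated
  have h1 : ∀ᶠ x in nhds x₀, ∀ i ∈ S, i ≠ istar →
      max (f i x) 0 < max (f istar x) 0 := by
    rw [Filter.eventually_all_finset S]
    intro i hi
    by_cases hne : i = istar
    · filter_upwards with x h; exact absurd hne h
    · filter_upwards [((hfc i).max continuousAt_const).eventually_lt
        ((hfc istar).max continuousAt_const) (hstrict i hi hne)] with x hx _
      exact hx
  have h2 : ∀ᶠ x in nhds x₀, 0 < f istar x :=
    continuousAt_const.eventually_lt (hfc istar) hviol
  -- hence eventually sel x = istar and F x = G x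
  have hFG : F =ᶠ[nhds x₀] G := by
    filter_upwards [h1, h2] with x hx1 hx2
    have hsel : sel x = istar := by
      by_contra hne
      exact absurd (hsel_max x istar histar)
        (not_le.2 (hx1 (sel x) (hsel_mem x) hne))
    have hmax : max (f istar x) 0 = f istar x := max_eq_left hx2.le
    simp only [F, G, hsel, hf] at *
    rw [hmax]
  -- differentiability of G
  have hnorm : ∀ v : EuclideanSpace ℝ (Fin n), ‖v‖ ^ 2 = (inner ℝ v v : ℝ) :=
    fun v => (real_inner_self_eq_norm_sq v).symm
  have hdenom : DifferentiableAt ℝ (fun x => ‖a istar x‖ ^ 2) x₀ := by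
    simp only [hnorm]
    exact (ha istar).inner ℝ (ha istar)
  have hdenom0 : ‖a istar x₀‖ ^ 2 ≠ 0 :=
    pow_ne_zero 2 (norm_ne_zero_iff.2 hrow)
  have hG : DifferentiableAt ℝ G x₀ := by
    have hnum0 : DifferentiableAt ℝ
        (fun x => δ * ((inner ℝ (a istar x) (z x) : ℝ) - b istar x)) x₀ :=
      (((ha istar).inner ℝ hz).sub (hb istar)).const_mul δ
    have hnum : DifferentiableAt ℝ
        (fun x => δ * ((inner ℝ (a istar x) (z x) : ℝ) - b istar x) /
          ‖a istar x‖ ^ 2) x₀ := by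
      simp only [div_eq_mul_inv]
      exact hnum0.mul (hdenom.inv hdenom0)
    exact hz.sub (hnum.smul (ha istar))
  have hF : DifferentiableAt ℝ F x₀ := hG.congr_of_eventuallyEq hFG
  exact ⟨hF, Filter.EventuallyEq.fderiv_eq hFG⟩
end
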